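/- Let H be a separable infinite-dimensional complex Hilbert space and let o be an observable on H. Then the restriction ν of o to the closed subsets of ℝ satisfies: (O1) ν(∅) = ⊥ and ν(ℝ) = ⊤; (O2) for every decreasing sequence (C_n) of closed subsets of ℝ (C_{n+1} ⊆ C_n for all n), ν(⋂_n C_n) is the intersection of the closed subspaces ν(C_n); (O3) for every unit vector x ∈ H and all closed subsets A, B of ℝ, ν_x(A) + ν_x(B) = ν_x(A ∪ B) + ν_x(A ∩ B), where ν_x(C) = re⟪x, proj_{ν(C)} x⟫. -/

import Mathlib

open scoped InnerProductSpace

noncomputable section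

variable {H : Type*} [NormedAddCommGroup H] [InnerProductSpace ℂ H] [CompleteSpace H]

/-- The type of closed subspaces of a complex inner product space `H`. -/
abbrev ClosedSubspace (H : Type*) [NormedAddCommGroup H] [InnerProductSpace ℂ H] :=
  {P : Submodule ℂ H // IsClosed (P : Set H)}

/-- The trivial closed subspace `{0}`. -/
def csBot : ClosedSubspace H :=
  ⟨⊥, by rw [Submodule.bot_coe]; exact isClosed_singleton⟩

/-- The total closed subspace `H`. -/
def csTop : ClosedSubspace H :=
  ⟨⊤, by rw [Submodule.top_coe]; exact isClosed_univ⟩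

/-- Orthogonal projection onto a closed subspace, as a map `H → H`. -/
noncomputable def cproj (P : ClosedSubspace H) (x : H) : H :=
  letI : CompleteSpace P.1 := P.2.completeSpace_coe
  (Submodule.orthogonalProjectionOnto P.1 x : H)

/-- Two subspaces are orthogonal: every vector of one is orthogonal to every
vector of the other. -/
def OrthoSub (P Q : Submodule ℂ H) : Prop :=
  ∀ x ∈ P, ∀ y ∈ Q, ⟪x, y⟫_ℂ = 0

/-- A (quantum) state: a `[0,1]`-valued map on closed subspaces with `s ⊥ = 0`,
`s ⊤ = 1` which is countably additive on pairwise orthogonal families (where the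
"sup" of such a family is the topological closure of the lattice supremum). -/
def IsState (s : ClosedSubspace H → ℝ) : Prop :=
  (∀ P, s P ∈ Set.Icc (0 : ℝ) 1) ∧
  s csBot = 0 ∧ s csTop = 1 ∧
  ∀ P : ℕ → ClosedSubspace H, (∀ m n, m ≠ n → OrthoSub (P m).1 (P n).1) →
    s ⟨(⨆ n, (P n).1).topologicalClosure, Submodule.isClosed_topologicalClosure _⟩
      = ∑' n, s (P n)

/-- A (quantum) observable: a projector-valued measure on the Borel subsets of `ℝ`. -/
def IsObservable (o : {X : Set ℝ // MeasurableSet X} → ClosedSubspace H) : Prop :=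
  o ⟨∅, MeasurableSet.empty⟩ = csBot ∧
  o ⟨Set.univ, MeasurableSet.univ⟩ = csTop ∧
  (∀ X : ℕ → {X : Set ℝ // MeasurableSet X},
    o ⟨⋃ n, (X n).1, MeasurableSet.iUnion fun n => (X n).2⟩
      = ⟨(⨆ n, (o (X n)).1).topologicalClosure,
          Submodule.isClosed_topologicalClosure _⟩) ∧
  ∀ X Y : {X : Set ℝ // MeasurableSet X}, X.1 ∩ Y.1 = ∅ → OrthoSub (o X).1 (o Y).1

section Aux

lemma orthoSub_le_orthogonal {P Q : Submodule ℂ H} (h : OrthoSub P Q) : Q ≤ Pᗮ := by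
  intro q hq
  rw [Submodule.mem_orthogonal]
  intro p hp
  exact h p hp q hq

/-- Binary additivity of an observable. -/
lemma obs_union (o : {X : Set ℝ // MeasurableSet X} → ClosedSubspace H) (ho : IsObservable o)
    (X Y : {X : Set ℝ // MeasurableSet X}) :
    (o ⟨X.1 ∪ Y.1, X.2.union Y.2⟩).1 = ((o X).1 ⊔ (o Y).1).topologicalClosure := by
  classical
  set Z : ℕ → {X : Set ℝ // MeasurableSet X} := fun n =>
    if n = 0 then X else if n = 1 then Y else ⟨∅, MeasurableSet.empty⟩ with hZ
  have hU : (⋃ n, (Z n).1) = X.1 ∪ Y.1 := by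
    apply subset_antisymm
    · apply Set.iUnion_subset
      intro n
      rcases n with _ | _ | n
      · simp [hZ]
      · simp [hZ]
      · simp [hZ]
    · apply Set.union_subset
      · exact Set.subset_iUnion_of_subset 0 (by simp [hZ])
      · exact Set.subset_iUnion_of_subset 1 (by simp [hZ])
  have hS : (⨆ n, (o (Z n)).1) = (o X).1 ⊔ (o Y).1 := by
    apply le_antisymm
    · apply iSup_le
      intro n
      rcases n with _ | _ | n
      · simp only [hZ, if_pos rfl]; exact le_sup_left
      · simp only [hZ]; norm_num
      · have : Z (n + 2) = ⟨∅, MeasurableSet.empty⟩ := by simp [hZ]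
        rw [this, ho.1]
        simp [csBot]
    · apply sup_le
      · exact le_iSup_of_le 0 (by simp [hZ])
      · exact le_iSup_of_le 1 (by norm_num [hZ])
  have key := ho.2.2.1 Z
  have heq : (⟨⋃ n, (Z n).1, MeasurableSet.iUnion fun n => (Z n).2⟩ :
      {X : Set ℝ // MeasurableSet X}) = ⟨X.1 ∪ Y.1, X.2.union Y.2⟩ := Subtype.ext hU
  rw [heq] at key
  rw [key]
  simp only [hS]

/-- The observable of a complement is the orthogonal complement. -/
lemma obs_compl (o : {X : Set ℝ // MeasurableSet X} → ClosedSubspace H) (ho : IsObservable o)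
    (X : {X : Set ℝ // MeasurableSet X}) :
    (o ⟨X.1ᶜ, X.2.compl⟩).1 = (o X).1ᗮ := by
  set P := (o X).1 with hP
  set Q := (o ⟨X.1ᶜ, X.2.compl⟩).1 with hQ
  haveI : CompleteSpace P := (o X).2.completeSpace_coe
  have hPQ : Q ≤ Pᗮ :=
    orthoSub_le_orthogonal (ho.2.2.2 X ⟨X.1ᶜ, X.2.compl⟩ (Set.inter_compl_self _))
  have htop : (P ⊔ Q).topologicalClosure = ⊤ := by
    have h1 := obs_union o ho X ⟨X.1ᶜ, X.2.compl⟩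
    have he : (⟨X.1 ∪ X.1ᶜ, X.2.union X.2.compl⟩ : {X : Set ℝ // MeasurableSet X})
        = ⟨Set.univ, MeasurableSet.univ⟩ := Subtype.ext (Set.union_compl_self _)
    rw [he, ho.2.1] at h1
    exact h1.symm
  refine le_antisymm hPQ ?_
  intro y hy
  set T : H →L[ℂ] H := Pᗮ.subtypeL.comp (Submodule.orthogonalProjectionOnto Pᗮ) with hT
  have hQc : IsClosed ((Q.comap (T : H →ₗ[ℂ] H)) : Set H) := by
    have : ((Q.comap (T : H →ₗ[ℂ] H)) : Set H) = T ⁻¹' Q := rfl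
    rw [this]
    exact (o ⟨X.1ᶜ, X.2.compl⟩).2.preimage T.continuous
  have hsub : P ⊔ Q ≤ Q.comap (T : H →ₗ[ℂ] H) := by
    apply sup_le
    · intro p hp
      have : Submodule.orthogonalProjectionOnto Pᗮ p = 0 :=
        Submodule.orthogonalProjectionOnto_apply_of_mem_orthogonal
          (P.le_orthogonal_orthogonal hp)
      simp only [Submodule.mem_comap, ContinuousLinearMap.coe_coe, hT,
        ContinuousLinearMap.comp_apply, this]
      simp
    · intro q hq
      have : Submodule.orthogonalProjectionOnto Pᗮ q = ⟨q, hPQ hq⟩ :=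
        Submodule.orthogonalProjectionOnto_mem_subspace_eq_self (⟨q, hPQ hq⟩ : Pᗮ)
      simp only [Submodule.mem_comap, ContinuousLinearMap.coe_coe, hT,
        ContinuousLinearMap.comp_apply, this]
      exact hq
  have hle : (P ⊔ Q).topologicalClosure ≤ Q.comap (T : H →ₗ[ℂ] H) :=
    Submodule.topologicalClosure_minimal _ hsub hQc
  have hy' : y ∈ Q.comap (T : H →ₗ[ℂ] H) := hle (htop ▸ Submodule.mem_top)
  have hTy : T y = y := by
    have : Submodule.orthogonalProjectionOnto Pᗮ y = ⟨y, hy⟩ :=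
      Submodule.orthogonalProjectionOnto_mem_subspace_eq_self (⟨y, hy⟩ : Pᗮ)
    simp [hT, this]
  rwa [Submodule.mem_comap, ContinuousLinearMap.coe_coe, hTy] at hy'

/-- Projection onto the closure of the sup of orthogonal closed subspaces is the sum. -/
lemma cproj_sup (P Q : ClosedSubspace H) (h : OrthoSub P.1 Q.1) (x : H) :
    cproj (⟨(P.1 ⊔ Q.1).topologicalClosure,
        Submodule.isClosed_topologicalClosure _⟩ : ClosedSubspace H) x
      = cproj P x + cproj Q x := by
  haveI : CompleteSpace P.1 := P.2.completeSpace_coe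
  haveI : CompleteSpace Q.1 := Q.2.completeSpace_coe
  haveI : CompleteSpace ((P.1 ⊔ Q.1).topologicalClosure : Submodule ℂ H) :=
    (Submodule.isClosed_topologicalClosure _).completeSpace_coe
  show ((Submodule.orthogonalProjectionOnto (P.1 ⊔ Q.1).topologicalClosure x : H))
      = (Submodule.orthogonalProjectionOnto P.1 x : H) + (Submodule.orthogonalProjectionOnto Q.1 x : H)
  set p : H := (Submodule.orthogonalProjectionOnto P.1 x : H) with hp
  set q : H := (Submodule.orthogonalProjectionOnto Q.1 x : H) with hq
  have hQP : Q.1 ≤ P.1ᗮ := orthoSub_le_orthogonal h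
  have hPQ : P.1 ≤ Q.1ᗮ := by
    intro a ha
    rw [Submodule.mem_orthogonal]
    intro b hb
    rw [← inner_conj_symm, h a ha b hb, map_zero]
  apply Submodule.eq_starProjection_of_mem_of_inner_eq_zero
  · exact Submodule.le_topologicalClosure _
      (Submodule.mem_sup.2 ⟨p, (Submodule.orthogonalProjectionOnto P.1 x).2, q,
        (Submodule.orthogonalProjectionOnto Q.1 x).2, rfl⟩)
  · intro w hw
    have hmem : x - (p + q) ∈ ((P.1 ⊔ Q.1).topologicalClosure)ᗮ := by
      have h1 : x - (p + q) ∈ (P.1 ⊔ Q.1)ᗮ := by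
        rw [Submodule.mem_orthogonal]
        intro u hu
        obtain ⟨a, ha, b, hb, rfl⟩ := Submodule.mem_sup.1 hu
        have hxp : x - p ∈ P.1ᗮ := Submodule.sub_starProjection_mem_orthogonal x
        have hxq : x - q ∈ Q.1ᗮ := Submodule.sub_starProjection_mem_orthogonal x
        have e1 : ⟪a, x - (p + q)⟫_ℂ = ⟪a, x - p⟫_ℂ - ⟪a, q⟫_ℂ := by
          rw [← inner_sub_right]
          congr 1
          abel
        have e2 : ⟪b, x - (p + q)⟫_ℂ = ⟪b, x - q⟫_ℂ - ⟪b, p⟫_ℂ := by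
          rw [← inner_sub_right]
          congr 1
          abel
        rw [inner_add_left, e1, e2,
          (Submodule.mem_orthogonal _ _).1 hxp a ha,
          (Submodule.mem_orthogonal _ _).1 hxq b hb,
          h a ha q (Submodule.orthogonalProjectionOnto Q.1 x).2]
        have : ⟪b, p⟫_ℂ = 0 := by
          rw [← inner_conj_symm, h p (Submodule.orthogonalProjectionOnto P.1 x).2 b hb, map_zero]
        rw [this]
        ring
      have h2 : (P.1 ⊔ Q.1)ᗮ ≤ ((P.1 ⊔ Q.1).topologicalClosure)ᗮ := by
        rw [← (P.1 ⊔ Q.1).orthogonal_orthogonal_eq_closure]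
        exact Submodule.le_orthogonal_orthogonal _
      exact h2 h1
    rw [inner_eq_zero_symm]
    exact (Submodule.mem_orthogonal _ _).1 hmem w hw

/-- Additivity of the induced state on disjoint measurable sets. -/
lemma nu_add (o : {X : Set ℝ // MeasurableSet X} → ClosedSubspace H) (ho : IsObservable o)
    (X Y : {X : Set ℝ // MeasurableSet X}) (hXY : X.1 ∩ Y.1 = ∅) (x : H) :
    (⟪x, cproj (o ⟨X.1 ∪ Y.1, X.2.union Y.2⟩) x⟫_ℂ).re
      = (⟪x, cproj (o X) x⟫_ℂ).re + (⟪x, cproj (o Y) x⟫_ℂ).re := by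
  have h1 : o ⟨X.1 ∪ Y.1, X.2.union Y.2⟩
      = ⟨((o X).1 ⊔ (o Y).1).topologicalClosure,
          Submodule.isClosed_topologicalClosure _⟩ :=
    Subtype.ext (obs_union o ho X Y)
  rw [h1, cproj_sup (o X) (o Y) (ho.2.2.2 X Y hXY) x, inner_add_right, Complex.add_re]

end Aux

/-- The restriction of an observable to the closed subsets of `ℝ` satisfies
(O1) `ν ∅ = ⊥`, `ν ℝ = ⊤`; (O2) `ν` sends intersections of decreasing sequences of
closed sets to intersections; (O3) for every unit vector `x` the induced map
`C ↦ re⟪x, proj_{ν C} x⟫` is modular on closed sets. -/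
theorem observable_restriction_is_quantum_valuation [TopologicalSpace.SeparableSpace H]
    (hinf : ¬ FiniteDimensional ℂ H)
    (o : {X : Set ℝ // MeasurableSet X} → ClosedSubspace H) (ho : IsObservable o) :
    (o ⟨∅, MeasurableSet.empty⟩ = csBot ∧ o ⟨Set.univ, MeasurableSet.univ⟩ = csTop) ∧
    (∀ (C : ℕ → Set ℝ) (hC : ∀ n, IsClosed (C n)), (∀ n, C (n + 1) ⊆ C n) →
       o ⟨⋂ n, C n, MeasurableSet.iInter fun n => (hC n).measurableSet⟩
         = ⟨⨅ n, (o ⟨C n, (hC n).measurableSet⟩).1, by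
             rw [Submodule.coe_iInf]
             exact isClosed_iInter fun n => (o ⟨C n, (hC n).measurableSet⟩).2⟩) ∧
    (∀ x : H, ‖x‖ = 1 → ∀ (A B : Set ℝ) (hA : IsClosed A) (hB : IsClosed B),
       (⟪x, cproj (o ⟨A, hA.measurableSet⟩) x⟫_ℂ).re
         + (⟪x, cproj (o ⟨B, hB.measurableSet⟩) x⟫_ℂ).re
       = (⟪x, cproj (o ⟨A ∪ B, (hA.union hB).measurableSet⟩) x⟫_ℂ).re
         + (⟪x, cproj (o ⟨A ∩ B, (hA.inter hB).measurableSet⟩) x⟫_ℂ).re) := by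
  refine ⟨⟨ho.1, ho.2.1⟩, ?_, ?_⟩
  · intro C hC _hmono
    apply Subtype.ext
    set K : ℕ → Submodule ℂ H := fun n => (o ⟨C n, (hC n).measurableSet⟩).1 with hK
    haveI : ∀ n, CompleteSpace (K n) := fun n =>
      (o ⟨C n, (hC n).measurableSet⟩).2.completeSpace_coe
    haveI : CompleteSpace (⨅ n, K n : Submodule ℂ H) := by
      refine IsClosed.completeSpace_coe (hs := ?_)
      rw [Submodule.coe_iInf]
      exact isClosed_iInter fun n => (o ⟨C n, (hC n).measurableSet⟩).2
    set P := (o ⟨⋂ n, C n, MeasurableSet.iInter fun n => (hC n).measurableSet⟩).1 with hPdef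
    haveI : CompleteSpace P :=
      (o ⟨⋂ n, C n, MeasurableSet.iInter fun n => (hC n).measurableSet⟩).2.completeSpace_coe
    have hcompl : Pᗮ = (⨅ n, K n)ᗮ := by
      have h1 := obs_compl o ho ⟨⋂ n, C n, MeasurableSet.iInter fun n => (hC n).measurableSet⟩
      set D : ℕ → {X : Set ℝ // MeasurableSet X} := fun n =>
        ⟨(C n)ᶜ, (hC n).measurableSet.compl⟩ with hD
      have h2 := ho.2.2.1 D
      have he : (⟨⋃ n, (D n).1, MeasurableSet.iUnion fun n => (D n).2⟩ :
          {X : Set ℝ // MeasurableSet X})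
          = ⟨(⋂ n, C n)ᶜ, (MeasurableSet.iInter fun n => (hC n).measurableSet).compl⟩ := by
        apply Subtype.ext
        simp [hD, Set.compl_iInter]
      rw [he] at h2
      have h3 : (o ⟨(⋂ n, C n)ᶜ,
          (MeasurableSet.iInter fun n => (hC n).measurableSet).compl⟩).1
          = (⨆ n, (o (D n)).1).topologicalClosure := congrArg Subtype.val h2
      have h4 : ∀ n, (o (D n)).1 = (K n)ᗮ := fun n =>
        obs_compl o ho ⟨C n, (hC n).measurableSet⟩
      have h5 : Pᗮ = (⨆ n, (K n)ᗮ).topologicalClosure := by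
        rw [← h1, h3]
        congr 1
        exact iSup_congr h4
      rw [h5, ← Submodule.orthogonal_orthogonal_eq_closure]
      congr 1
      have h6 : ⨅ n, ((K n)ᗮ)ᗮ = (⨆ n, (K n)ᗮ)ᗮ := Submodule.iInf_orthogonal _
      rw [← h6]
      exact iInf_congr fun n => (K n).orthogonal_orthogonal
    calc P = Pᗮᗮ := P.orthogonal_orthogonal.symm
      _ = (⨅ n, K n)ᗮᗮ := by rw [hcompl]
      _ = ⨅ n, K n := (⨅ n, K n).orthogonal_orthogonal
  · intro x _hx A B hA hB
    have hd1 : (A \ B) ∩ (A ∩ B) = ∅ := by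
      ext t; simp only [Set.mem_inter_iff, Set.mem_diff, Set.mem_empty_iff_false]; tauto
    have hd2 : (B \ A) ∩ (A ∩ B) = ∅ := by
      ext t; simp only [Set.mem_inter_iff, Set.mem_diff, Set.mem_empty_iff_false]; tauto
    have hd3 : (A \ B) ∩ B = ∅ := by
      ext t; simp only [Set.mem_inter_iff, Set.mem_diff, Set.mem_empty_iff_false]; tauto
    have h1 := nu_add o ho ⟨A \ B, hA.measurableSet.diff hB.measurableSet⟩
      ⟨A ∩ B, (hA.inter hB).measurableSet⟩ hd1 x
    have h2 := nu_add o ho ⟨B \ A, hB.measurableSet.diff hA.measurableSet⟩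
      ⟨A ∩ B, (hA.inter hB).measurableSet⟩ hd2 x
    have h3 := nu_add o ho ⟨A \ B, hA.measurableSet.diff hB.measurableSet⟩
      ⟨B, hB.measurableSet⟩ hd3 x
    have e1 : (⟨(A \ B) ∪ (A ∩ B),
        (hA.measurableSet.diff hB.measurableSet).union ((hA.inter hB).measurableSet)⟩ :
        {X : Set ℝ // MeasurableSet X}) = ⟨A, hA.measurableSet⟩ :=
      Subtype.ext (Set.diff_union_inter A B)
    have e2 : (⟨(B \ A) ∪ (A ∩ B),
        (hB.measurableSet.diff hA.measurableSet).union ((hA.inter hB).measurableSet)⟩ :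
        {X : Set ℝ // MeasurableSet X}) = ⟨B, hB.measurableSet⟩ := by
      apply Subtype.ext
      show (B \ A) ∪ (A ∩ B) = B
      rw [Set.inter_comm]
      exact Set.diff_union_inter B A
    have e3 : (⟨(A \ B) ∪ B,
        (hA.measurableSet.diff hB.measurableSet).union hB.measurableSet⟩ :
        {X : Set ℝ // MeasurableSet X}) = ⟨A ∪ B, (hA.union hB).measurableSet⟩ :=
      Subtype.ext (Set.diff_union_self)
    rw [e1] at h1
    rw [e2] at h2
    rw [e3] at h3
    linarith
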